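/- arXiv:2206.05421 — 2 statements merged into one kernel-verified Lean document; each statement's English description precedes it below -/
import Mathlib

section
/- Let P be a graphoid over V. If M is any Markov blanket of X relative to Z ⊆ V \ {X}, then the unique Markov boundary MB(X, Z) is a subset of M. -/
open Classical
attribute [local instance] Classical.propDecidable

variable {V : Type} [Fintype V] [DecidableEq V]

/-- A conditional independence model over variable set `V`:
`I A B C` means `A` is independent of `B` given `C`. -/
abbrev IndepModel (V : Type) :=
  Finset V → Finset V → Finset V → Prop

/-- Semigraphoid axioms. -/
structure Semigraphoid (I : IndepModel V) : Prop where
  symm : ∀ A B C, I A B C → I B A C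
  decomposition : ∀ A B W C, I A (B ∪ W) C → I A B C ∧ I A W C
  weakUnion : ∀ A B W C, I A (B ∪ W) C → I A B (C ∪ W)
  contraction : ∀ A B W C, I A B C → I A W (C ∪ B) → I A (B ∪ W) C

/-- Graphoid axioms. -/
structure Graphoid (I : IndepModel V) extends Semigraphoid I : Prop where
  intersection : ∀ A B W C, I A B (C ∪ W) → I A W (C ∪ B) → I A (B ∪ W) C

/-- Compositional graphoid axioms. -/
structure CompGraphoid (I : IndepModel V) extends Graphoid I : Prop where
  composition : ∀ A B W C, I A B C → I A W C → I A (B ∪ W) C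

/-- `M` is a Markov blanket of `X` relative to `Z`. -/
def MarkovBlanket (I : IndepModel V) (X : V) (Z M : Finset V) : Prop :=
  M ⊆ Z ∧ I {X} (Z \ M) M

/-- `M` is a Markov boundary (minimal Markov blanket) of `X` relative to `Z`. -/
def MarkovBoundary (I : IndepModel V) (X : V) (Z M : Finset V) : Prop :=
  MarkovBlanket I X Z M ∧ ∀ M' ⊂ M, ¬ I {X} (Z \ M') M'

/-- A directed graph on `V`, given by its finite set of directed edges. -/
abbrev EdgeSet (V : Type) := Finset (V × V)

def Adj (E : EdgeSet V) (a b : V) : Prop := (a, b) ∈ E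

/-- Acyclicity: no vertex reaches itself by a nontrivial directed path. -/
def IsDAG (E : EdgeSet V) : Prop := ∀ v, ¬ Relation.TransGen (Adj E) v v

def parents (E : EdgeSet V) (v : V) : Finset V :=
  (E.filter (fun e => e.2 = v)).image Prod.fst

def IsCollider (E : EdgeSet V) (x y z : V) : Prop := Adj E x y ∧ Adj E z y

/-- The middle vertex `y` of a path triple `x - y - z` does not block the path
given conditioning set `C`. -/
def ActiveTriple (E : EdgeSet V) (C : Finset V) (x y z : V) : Prop :=
  (IsCollider E x y z ∧ ∃ d ∈ C, Relation.ReflTransGen (Adj E) y d) ∨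
  (¬ IsCollider E x y z ∧ y ∉ C)

/-- `a` and `b` are d-connected given `C` in the graph `E`. -/
def DConn (E : EdgeSet V) (C : Finset V) (a b : V) : Prop :=
  ∃ p : List V, 2 ≤ p.length ∧ p.head? = some a ∧ p.getLast? = some b ∧
    (∀ (i : ℕ) (h : i + 1 < p.length),
      Adj E (p.get ⟨i, by omega⟩) (p.get ⟨i + 1, h⟩) ∨
      Adj E (p.get ⟨i + 1, h⟩) (p.get ⟨i, by omega⟩)) ∧
    (∀ (i : ℕ) (h : i + 2 < p.length),
      ActiveTriple E C (p.get ⟨i, by omega⟩) (p.get ⟨i + 1, by omega⟩) (p.get ⟨i + 2, h⟩))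

/-- `A` and `B` are d-separated given `C`. -/
def DSep (E : EdgeSet V) (A B C : Finset V) : Prop :=
  ∀ a ∈ A, ∀ b ∈ B, ¬ DConn E C a b

def PairwiseDisjoint3 (A B C : Finset V) : Prop :=
  Disjoint A B ∧ Disjoint A C ∧ Disjoint B C

/-- `I(G) ⊆ I(P)`: every d-separation of the graph is an independence of `I`. -/
def Markovian (E : EdgeSet V) (I : IndepModel V) : Prop :=
  ∀ A B C, PairwiseDisjoint3 A B C → DSep E A B C → I A B C

/-- `I(P) ⊆ I(G)`: every independence of `I` is a d-separation of the graph. -/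
def FaithfulTo (E : EdgeSet V) (I : IndepModel V) : Prop :=
  ∀ A B C, PairwiseDisjoint3 A B C → I A B C → DSep E A B C

/-- `I(E) ⊆ I(E')` : every d-separation statement of `E` holds in `E'`. -/
def ISub (E E' : EdgeSet V) : Prop :=
  ∀ A B C, PairwiseDisjoint3 A B C → DSep E A B C → DSep E' A B C

/-- Markov equivalence: same d-separation statements. -/
def MEquiv (E E' : EdgeSet V) : Prop := ISub E E' ∧ ISub E' E

/-- Markovian DAGs. -/
def CMC (I : IndepModel V) : Set (EdgeSet V) := {G | IsDAG G ∧ Markovian G I}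

/-- Faithful DAGs. -/
def CFC (I : IndepModel V) : Set (EdgeSet V) := {G | G ∈ CMC I ∧ FaithfulTo G I}

/-- SGS-minimal DAGs: Markovian with no Markovian proper subgraph. -/
def SGSmin (I : IndepModel V) : Set (EdgeSet V) :=
  {G | G ∈ CMC I ∧ ∀ G' ⊆ G, G' ∈ CMC I → G' = G}

/-- Frugal DAGs: Markovian with minimal edge count. -/
def Fr (I : IndepModel V) : Set (EdgeSet V) :=
  {G | G ∈ CMC I ∧ ∀ G' ∈ CMC I, G.card ≤ G'.card}

/-- Uniquely frugal DAGs. -/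
def uFr (I : IndepModel V) : Set (EdgeSet V) :=
  {G | G ∈ Fr I ∧ ∀ G' ∈ Fr I, MEquiv G' G}

/-- P-minimal DAGs: Markovian `G` such that no Markovian `G'` has `I(G) ⊊ I(G')`. -/
def Pm (I : IndepModel V) : Set (EdgeSet V) :=
  {G | G ∈ CMC I ∧ ∀ G' ∈ CMC I, ISub G G' → ISub G' G}

/-- Uniquely P-minimal DAGs. -/
def uPm (I : IndepModel V) : Set (EdgeSet V) :=
  {G | G ∈ Pm I ∧ ∀ G' ∈ Pm I, MEquiv G' G}

/-- A list is a permutation of the vertices of `V`. -/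
def IsPermList (π : List V) : Prop := π.Nodup ∧ ∀ v : V, v ∈ π

/-- The set of vertices preceding `k` in the permutation `π`. -/
def pre (π : List V) (k : V) : Finset V := (π.takeWhile (fun x => x != k)).toFinset

/-- The DAG induced from a permutation `π` by the Raskutti–Uhler (RU) construction:
`j → k` is an edge iff `j` precedes `k` in `π` and `X_j` is dependent on `X_k`
given all other predecessors of `k`. -/
noncomputable def RUedges (I : IndepModel V) (π : List V) : EdgeSet V :=
  Finset.univ.filter
    (fun e => e.1 ∈ pre π e.2 ∧ ¬ I {e.1} {e.2} ((pre π e.2).erase e.1))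

/-- `j → k` is a covered edge of `E`. -/
def CoveredEdge (E : EdgeSet V) (j k : V) : Prop :=
  (j, k) ∈ E ∧ parents E j = (parents E k).erase j

/-- `j → k` is a singular edge of `E`: no directed path from `j` to `k` other than
the edge itself. -/
def SingularEdge (E : EdgeSet V) (j k : V) : Prop :=
  (j, k) ∈ E ∧
    ∀ i, Relation.TransGen (Adj E) j i → Relation.TransGen (Adj E) i k → i = j ∨ i = k

/-- `π` is a causal order of the graph `E`: every ancestor of a vertex precedes it. -/
def CausalOrder (E : EdgeSet V) (π : List V) : Prop :=
  IsPermList π ∧ ∀ a b, Relation.TransGen (Adj E) a b → π.idxOf a < π.idxOf b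

/-- Two permutations differ by one adjacent transposition. -/
def AdjTrans (π τ : List V) : Prop :=
  ∃ (δ₁ δ₂ : List V) (a b : V), π = δ₁ ++ a :: b :: δ₂ ∧ τ = δ₁ ++ b :: a :: δ₂

/-- The non-descendants of `j` in the graph `E`. -/
noncomputable def nonDesc (E : EdgeSet V) (j : V) : Finset V :=
  Finset.univ.filter (fun i => ¬ Relation.ReflTransGen (Adj E) j i)


/-- The intersection of two Markov blankets is a Markov blanket. -/
lemma blanket_inter (I : IndepModel V) (hG : Graphoid I)
    (X : V) (Z M1 M2 : Finset V)
    (h1 : MarkovBlanket I X Z M1) (h2 : MarkovBlanket I X Z M2) :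
    MarkovBlanket I X Z (M1 ∩ M2) := by
  obtain ⟨hs1, hi1⟩ := h1
  obtain ⟨hs2, hi2⟩ := h2
  set A := M1 \ M2 with hA
  set B := M2 \ M1 with hB
  set C := M1 ∩ M2 with hC
  set R := Z \ (M1 ∪ M2) with hR
  have eZ1 : Z \ M1 = R ∪ B := by
    ext x
    simp only [hR, hB, Finset.mem_sdiff, Finset.mem_union]
    constructor
    · rintro ⟨hx, hn⟩
      by_cases h : x ∈ M2
      · exact Or.inr ⟨h, hn⟩
      · exact Or.inl ⟨hx, by simp [hn, h]⟩
    · rintro (⟨hx, hn⟩ | ⟨hx, hn⟩)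
      · exact ⟨hx, fun h => hn (Or.inl h)⟩
      · exact ⟨hs2 hx, hn⟩
  have eZ2 : Z \ M2 = R ∪ A := by
    ext x
    simp only [hR, hA, Finset.mem_sdiff, Finset.mem_union]
    constructor
    · rintro ⟨hx, hn⟩
      by_cases h : x ∈ M1
      · exact Or.inr ⟨h, hn⟩
      · exact Or.inl ⟨hx, by simp [hn, h]⟩
    · rintro (⟨hx, hn⟩ | ⟨hx, hn⟩)
      · exact ⟨hx, fun h => hn (Or.inr h)⟩
      · exact ⟨hs1 hx, hn⟩
  have eM1 : M1 = C ∪ A := by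
    ext x; simp only [hC, hA, Finset.mem_union, Finset.mem_inter, Finset.mem_sdiff]; tauto
  have eM2 : M2 = C ∪ B := by
    ext x; simp only [hC, hB, Finset.mem_union, Finset.mem_inter, Finset.mem_sdiff]; tauto
  -- from blanket M1: I X B (C ∪ A) and I X R (C ∪ A ∪ B)
  rw [eZ1] at hi1
  rw [eZ2] at hi2
  have d1 := (hG.decomposition {X} R B M1 hi1).2
  have w1 := hG.weakUnion {X} R B M1 hi1
  have d2 := (hG.decomposition {X} R A M2 hi2).2
  rw [eM1] at d1
  rw [eM2] at d2
  have hint := hG.intersection {X} A B C d2 d1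
  rw [eM1] at w1
  have hcon := hG.contraction {X} (A ∪ B) R C hint (by rw [Finset.union_assoc] at w1; exact w1)
  have eFin : Z \ C = A ∪ B ∪ R := by
    ext x
    simp only [hC, hA, hB, hR, Finset.mem_sdiff, Finset.mem_inter, Finset.mem_union]
    constructor
    · rintro ⟨hx, hn⟩
      by_cases h1' : x ∈ M1
      · exact Or.inl (Or.inl ⟨h1', fun h => hn ⟨h1', h⟩⟩)
      · by_cases h2' : x ∈ M2
        · exact Or.inl (Or.inr ⟨h2', h1'⟩)
        · exact Or.inr ⟨hx, by simp [h1', h2']⟩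
    · rintro ((⟨hx, hn⟩ | ⟨hx, hn⟩) | ⟨hx, hn⟩)
      · exact ⟨hs1 hx, fun h => hn h.2⟩
      · exact ⟨hs2 hx, fun h => hn h.1⟩
      · exact ⟨hx, fun h => hn (Or.inl h.1)⟩
  refine ⟨fun x hx => hs1 (Finset.mem_inter.mp hx).1, ?_⟩
  rw [eFin]
  exact hcon

/-- the Markov boundary is contained in every Markov blanket. -/
theorem markov_boundary_subset_blanket (I : IndepModel V) (hG : Graphoid I)
    (X : V) (Z : Finset V) (hXZ : X ∉ Z) (M Mb : Finset V)
    (hM : MarkovBlanket I X Z M) (hMb : MarkovBoundary I X Z Mb) :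
    Mb ⊆ M := by
  obtain ⟨hbl, hmin⟩ := hMb
  have hinter := blanket_inter I hG X Z M Mb hM hbl
  by_contra hns
  have hss : M ∩ Mb ⊂ Mb := by
    constructor
    · exact Finset.inter_subset_right
    · intro h
      exact hns fun x hx => (Finset.mem_inter.mp (h hx)).1
  exact hmin (M ∩ Mb) hss hinter.2
end

section
/- Let P be a graphoid over V, and let π, τ be permutations of the vertices such that τ is obtained from π by swapping two adjacent entries j and k (with j immediately before k in π). Then the induced DAGs satisfy G_π = G_τ if and only if X_j is independent of X_k given the variables preceding j in π. -/
open Classical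
attribute [local instance] Classical.propDecidable

variable {V : Type} [Fintype V] [DecidableEq V]

section Helpers

omit [Fintype V] in
lemma pre_cons (a v : V) (l : List V) :
    pre (a :: l) v = if a = v then ∅ else insert a (pre l v) := by
  by_cases h : a = v <;> simp [pre, List.takeWhile_cons, h]

omit [Fintype V] in
lemma pre_append_not_mem (l₁ l₂ : List V) (v : V) (h : v ∉ l₁) :
    pre (l₁ ++ l₂) v = l₁.toFinset ∪ pre l₂ v := by
  induction l₁ with
  | nil => simp [pre]
  | cons a t ih =>
    simp only [List.mem_cons, not_or] at h
    rw [List.cons_append, pre_cons, if_neg (fun e => h.1 e.symm), ih h.2]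
    simp [Finset.insert_union, h.1]

omit [Fintype V] in
lemma pre_append_mem (l₁ l₂ : List V) (v : V) (h : v ∈ l₁) :
    pre (l₁ ++ l₂) v = pre l₁ v := by
  induction l₁ with
  | nil => simp at h
  | cons a t ih =>
    by_cases hav : a = v
    · rw [List.cons_append, pre_cons, pre_cons, if_pos hav, if_pos hav]
    · simp only [List.mem_cons] at h
      rcases h with h | h
      · exact absurd h.symm hav
      · rw [List.cons_append, pre_cons, pre_cons, if_neg hav, if_neg hav, ih h]

omit [Fintype V] in
lemma swap_lemma {I : IndepModel V} (hG : Graphoid I) (k j x : V) (C : Finset V)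
    (h : I {k} {j} (insert x C)) :
    (I {k} {x} (insert j C) ↔ I {k} {x} C) := by
  have hjC : C ∪ {j} = insert j C := Finset.union_comm C {j} ▸ (Finset.insert_eq j C).symm
  have hxC : C ∪ {x} = insert x C := Finset.union_comm C {x} ▸ (Finset.insert_eq x C).symm
  constructor
  · intro h1
    have h2 := hG.intersection {k} {x} {j} C (hjC ▸ h1) (hxC ▸ h)
    exact (hG.decomposition _ _ _ _ h2).1
  · intro h1
    have h2 := hG.contraction {k} {x} {j} C h1 (hxC ▸ h)
    have := hG.weakUnion {k} {x} {j} C h2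
    rwa [hjC] at this

lemma mem_RU {I : IndepModel V} {π : List V} {a b : V} :
    (a, b) ∈ RUedges I π ↔ a ∈ pre π b ∧ ¬ I {a} {b} ((pre π b).erase a) := by
  simp [RUedges]

end Helpers

/-- swapping two adjacent entries `j, k` of a permutation preserves the
RU-induced DAG iff `X_j ⊥ X_k` given the predecessors of `j`. -/
theorem adjacent_transposition_iff (I : IndepModel V) (hG : Graphoid I)
    (j k : V) (δ₁ δ₂ : List V) (π τ : List V)
    (hπ : π = δ₁ ++ j :: k :: δ₂) (hτ : τ = δ₁ ++ k :: j :: δ₂)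
    (hperm : IsPermList π) :
    (RUedges I π = RUedges I τ ↔ I {j} {k} (pre π j)) := by
  subst hπ hτ
  obtain ⟨hnd, hall⟩ := hperm
  obtain ⟨hnd1, hnd2, hdisj⟩ := List.nodup_append.mp hnd
  have hjkδ := List.nodup_cons.mp hnd2
  have hkδ := List.nodup_cons.mp hjkδ.2
  have hjk : j ≠ k := fun e => hjkδ.1 (by simp [e])
  have hjδ₂ : j ∉ δ₂ := fun h => hjkδ.1 (by simp [h])
  have hkδ₂ : k ∉ δ₂ := hkδ.1
  have hjδ₁ : j ∉ δ₁ := fun h => hdisj j h j (by simp) rfl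
  have hkδ₁ : k ∉ δ₁ := fun h => hdisj k h k (by simp) rfl
  have hjD : j ∉ δ₁.toFinset := by simpa using hjδ₁
  have hkD : k ∉ δ₁.toFinset := by simpa using hkδ₁
  have hpj : pre (δ₁ ++ j :: k :: δ₂) j = δ₁.toFinset := by
    rw [pre_append_not_mem _ _ _ hjδ₁, pre_cons, if_pos rfl]; simp
  have hpk : pre (δ₁ ++ j :: k :: δ₂) k = insert j δ₁.toFinset := by
    rw [pre_append_not_mem _ _ _ hkδ₁, pre_cons, if_neg hjk, pre_cons, if_pos rfl]
    ext x; simp [or_comm]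
  have hτpk : pre (δ₁ ++ k :: j :: δ₂) k = δ₁.toFinset := by
    rw [pre_append_not_mem _ _ _ hkδ₁, pre_cons, if_pos rfl]; simp
  have hτpj : pre (δ₁ ++ k :: j :: δ₂) j = insert k δ₁.toFinset := by
    rw [pre_append_not_mem _ _ _ hjδ₁, pre_cons, if_neg (Ne.symm hjk), pre_cons, if_pos rfl]
    ext x; simp [or_comm]
  have hsymm : ∀ (x y : V) (S : Finset V), I {x} {y} S ↔ I {y} {x} S :=
    fun x y S => ⟨hG.symm _ _ _, hG.symm _ _ _⟩
  rw [hpj]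
  constructor
  · intro hEq
    by_contra hI
    have hmem : (j, k) ∈ RUedges I (δ₁ ++ j :: k :: δ₂) := by
      rw [mem_RU, hpk]
      exact ⟨Finset.mem_insert_self _ _, by rwa [Finset.erase_insert hjD]⟩
    rw [hEq, mem_RU, hτpk] at hmem
    exact hjD hmem.1
  · intro hI
    apply Finset.ext
    rintro ⟨a, b⟩
    rw [mem_RU, mem_RU]
    have hb : b ∈ δ₁ ∨ b = j ∨ b = k ∨ b ∈ δ₂ := by simpa using hall b
    rcases hb with hb | rfl | rfl | hb
    · rw [pre_append_mem _ _ _ hb, pre_append_mem _ _ _ hb]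
    · -- b = j
      rw [hpj, hτpj]
      by_cases hak : a = k
      · subst hak
        constructor
        · rintro ⟨h1, -⟩; exact absurd h1 hkD
        · rintro ⟨-, h2⟩
          rw [Finset.erase_insert hkD] at h2
          exact absurd (hG.symm _ _ _ hI) h2
      · rw [Finset.erase_insert_of_ne (Ne.symm hak)]
        by_cases haD : a ∈ δ₁.toFinset
        · have hins : insert a (δ₁.toFinset.erase a) = δ₁.toFinset := Finset.insert_erase haD
          have key := swap_lemma hG b k a (δ₁.toFinset.erase a) (by rwa [hins])
          rw [hsymm a b, hsymm a b, key]
          simp [Finset.mem_insert, hak, haD]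
        · constructor
          · rintro ⟨h1, -⟩; exact absurd h1 haD
          · rintro ⟨h1, -⟩
            rcases Finset.mem_insert.mp h1 with h | h
            · exact absurd h hak
            · exact absurd h haD
    · -- b = k
      rw [hpk, hτpk]
      by_cases haj : a = j
      · subst haj
        constructor
        · rintro ⟨-, h2⟩
          rw [Finset.erase_insert hjD] at h2
          exact absurd hI h2
        · rintro ⟨h1, -⟩; exact absurd h1 hjD
      · rw [Finset.erase_insert_of_ne (Ne.symm haj)]
        by_cases haD : a ∈ δ₁.toFinset
        · have hins : insert a (δ₁.toFinset.erase a) = δ₁.toFinset := Finset.insert_erase haD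
          have key := swap_lemma hG b j a (δ₁.toFinset.erase a)
            (by rw [hins]; exact hG.symm _ _ _ hI)
          rw [hsymm a b, hsymm a b, key]
          simp [Finset.mem_insert, haj, haD]
        · constructor
          · rintro ⟨h1, -⟩
            rcases Finset.mem_insert.mp h1 with h | h
            · exact absurd h haj
            · exact absurd h haD
          · rintro ⟨h1, -⟩; exact absurd h1 haD
    · -- b ∈ δ₂
      have hbδ₁ : b ∉ δ₁ := fun h => hdisj b h b (by simp [hb]) rfl
      have hbj : j ≠ b := fun e => hjδ₂ (e ▸ hb)
      have hbk : k ≠ b := fun e => hkδ₂ (e ▸ hb)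
      have e1 : pre (δ₁ ++ j :: k :: δ₂) b
          = δ₁.toFinset ∪ insert j (insert k (pre δ₂ b)) := by
        rw [pre_append_not_mem _ _ _ hbδ₁, pre_cons, if_neg hbj, pre_cons, if_neg hbk]
      have e2 : pre (δ₁ ++ k :: j :: δ₂) b
          = δ₁.toFinset ∪ insert k (insert j (pre δ₂ b)) := by
        rw [pre_append_not_mem _ _ _ hbδ₁, pre_cons, if_neg hbk, pre_cons, if_neg hbj]
      rw [e1, e2, Finset.insert_comm]
end
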